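/- (Kripke completeness) Every Kripke valid formula is provable in IntGC: if A is valid in every IntGC-model on every Kripke frame for IntGC, then ⊢ A. -/

import Mathlib

/-- Formulas of IntGC over a countable set of propositional variables (indexed by ℕ),
with connectives ¬, →, ∨, ∧ and modal operators ◆ (`dia`) and ∇ (`nab`). -/
inductive Formula : Type
  | var : ℕ → Formula
  | and : Formula → Formula → Formula
  | or  : Formula → Formula → Formula
  | imp : Formula → Formula → Formula
  | neg : Formula → Formula
  | dia : Formula → Formula
  | nab : Formula → Formula
  deriving DecidableEq

namespace Formula

/-- ⊤ := p → p for a fixed propositional variable. -/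
def top : Formula := imp (var 0) (var 0)

/-- ⊥ := ¬⊤. -/
def bot : Formula := neg top

/-- A ↔ B as defined connective. -/
def iff (A B : Formula) : Formula := Formula.and (imp A B) (imp B A)

end Formula

open Formula

/-- Provability in IntGC: the smallest set of formulas containing all substitution
instances of intuitionistic propositional theorems (generated by a standard Hilbert-style
axiomatisation, given as schemes), closed under modus ponens and the rules (GC1), (GC2). -/
inductive Prov : Formula → Prop
  | ax1 (A B : Formula) : Prov (imp A (imp B A))
  | ax2 (A B C : Formula) : Prov (imp (imp A (imp B C)) (imp (imp A B) (imp A C)))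
  | ax3 (A B : Formula) : Prov (imp (Formula.and A B) A)
  | ax4 (A B : Formula) : Prov (imp (Formula.and A B) B)
  | ax5 (A B : Formula) : Prov (imp A (imp B (Formula.and A B)))
  | ax6 (A B : Formula) : Prov (imp A (Formula.or A B))
  | ax7 (A B : Formula) : Prov (imp B (Formula.or A B))
  | ax8 (A B C : Formula) : Prov (imp (imp A C) (imp (imp B C) (imp (Formula.or A B) C)))
  | ax9 (A B : Formula) : Prov (imp (imp A B) (imp (imp A (neg B)) (neg A)))
  | ax10 (A B : Formula) : Prov (imp (neg A) (imp A B))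
  | mp {A B : Formula} : Prov (imp A B) → Prov A → Prov B
  | gc1 {A B : Formula} : Prov (imp A (nab B)) → Prov (imp (dia A) B)
  | gc2 {A B : Formula} : Prov (imp (dia A) B) → Prov (imp A (nab B))

/-- Satisfaction for the Kripke semantics of IntGC, relative to raw frame data:
a preorder `le`, an accessibility relation `R`, and a valuation `v`. -/
def Sat {X : Type} (le R : X → X → Prop) (v : ℕ → X → Prop) : X → Formula → Prop
  | x, .var p => v p x
  | x, .and A B => Sat le R v x A ∧ Sat le R v x B
  | x, .or A B => Sat le R v x A ∨ Sat le R v x B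
  | x, .imp A B => ∀ y, le x y → Sat le R v y A → Sat le R v y B
  | x, .neg A => ∀ y, le x y → ¬ Sat le R v y A
  | x, .dia A => ∃ y, R x y ∧ Sat le R v y A
  | x, .nab A => ∀ y, R y x → Sat le R v y A

/-- An IntGC-model: a Kripke frame (nonempty carrier, preorder ≤, relation R satisfying
x ≥ y, y R z, z ≥ w ⟹ x R w) together with a valuation assigning ≤-upward-closed sets
to propositional variables. -/
structure KModel where
  X : Type
  ne : Nonempty X
  le : X → X → Prop
  le_refl : ∀ x, le x x
  le_trans : ∀ x y z, le x y → le y z → le x z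
  R : X → X → Prop
  frame : ∀ x y z w, le y x → R y z → le w z → R x w
  v : ℕ → X → Prop
  up : ∀ p x y, le x y → v p x → v p y

/-- Satisfaction in an IntGC-model. -/
def KModel.sat (M : KModel) (x : M.X) (B : Formula) : Prop := Sat M.le M.R M.v x B

/-- The set of subformulas of a formula (including the formula itself). -/
def Subf : Formula → Set Formula
  | .var p => {.var p}
  | .and A B => insert (.and A B) (Subf A ∪ Subf B)
  | .or A B => insert (.or A B) (Subf A ∪ Subf B)
  | .imp A B => insert (.imp A B) (Subf A ∪ Subf B)
  | .neg A => insert (.neg A) (Subf A)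
  | .dia A => insert (.dia A) (Subf A)
  | .nab A => insert (.nab A) (Subf A)

/-- Γ = Subf(A) ∪ {∇◆B : ◆B ∈ Subf(A)} ∪ {◆∇B : ∇B ∈ Subf(A)}. -/
def Gam (A : Formula) : Set Formula :=
  Subf A ∪ {F | ∃ B, dia B ∈ Subf A ∧ F = nab (dia B)}
        ∪ {F | ∃ B, nab B ∈ Subf A ∧ F = dia (nab B)}

/-- `ndIter n F` is (∇◆)ⁿ F. -/
def ndIter : ℕ → Formula → Formula
  | 0, F => F
  | n+1, F => nab (dia (ndIter n F))

/-- `dnIter n F` is (◆∇)ⁿ F. -/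
def dnIter : ℕ → Formula → Formula
  | 0, F => F
  | n+1, F => dia (nab (dnIter n F))

/-- Σ = Subf(A) ∪ {(∇◆)ⁿ∇B : ∇B ∈ Γ} ∪ {◆(∇◆)ⁿ∇B : ∇B ∈ Γ}
           ∪ {(◆∇)ⁿ◆B : ◆B ∈ Γ} ∪ {∇(◆∇)ⁿ◆B : ◆B ∈ Γ}. -/
def Sig (A : Formula) : Set Formula :=
  Subf A
  ∪ {F | ∃ n B, nab B ∈ Gam A ∧ F = ndIter n (nab B)}
  ∪ {F | ∃ n B, nab B ∈ Gam A ∧ F = dia (ndIter n (nab B))}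
  ∪ {F | ∃ n B, dia B ∈ Gam A ∧ F = dnIter n (dia B)}
  ∪ {F | ∃ n B, dia B ∈ Gam A ∧ F = nab (dnIter n (dia B))}

/-- The equivalence x ∼ y iff x and y satisfy exactly the same formulas of Σ. -/
def simSetoid (M : KModel) (A : Formula) : Setoid M.X :=
  ⟨fun x y => ∀ B ∈ Sig A, (M.sat x B ↔ M.sat y B),
   ⟨fun _ _ _ => Iff.rfl,
    fun h B hB => (h B hB).symm,
    fun h1 h2 B hB => (h1 B hB).trans (h2 B hB)⟩⟩

/-- [x] ≤^f [y] iff every formula of Σ satisfied at x is satisfied at y. -/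
def leF (M : KModel) (A : Formula) (a b : Quotient (simSetoid M A)) : Prop :=
  ∀ x y : M.X, Quotient.mk (simSetoid M A) x = a → Quotient.mk (simSetoid M A) y = b →
    ∀ B ∈ Sig A, M.sat x B → M.sat y B

/-- [x] R^f [y] iff for all B with ∇B ∈ Σ, y ⊨ ∇B implies x ⊨ B. -/
def RF (M : KModel) (A : Formula) (a b : Quotient (simSetoid M A)) : Prop :=
  ∀ x y : M.X, Quotient.mk (simSetoid M A) x = a → Quotient.mk (simSetoid M A) y = b →
    ∀ B : Formula, nab B ∈ Sig A → M.sat y (nab B) → M.sat x B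

/-- v^f(p) = {[x] : x ⊨ p} for propositional variables p ∈ Σ, and ∅ otherwise. -/
def vF (M : KModel) (A : Formula) (p : ℕ) (a : Quotient (simSetoid M A)) : Prop :=
  var p ∈ Sig A ∧ ∃ x : M.X, Quotient.mk (simSetoid M A) x = a ∧ M.sat x (var p)

namespace IntGC
open Formula

/-- Derivability from a set of hypotheses. -/
inductive Deriv (Γ : Set Formula) : Formula → Prop
  | prov {A} : Prov A → Deriv Γ A
  | hyp {A} : A ∈ Γ → Deriv Γ A
  | mp {A B} : Deriv Γ (imp A B) → Deriv Γ A → Deriv Γ B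

theorem prov_imp_refl (A : Formula) : Prov (imp A A) :=
  Prov.mp (Prov.mp (Prov.ax2 A (imp A A) A) (Prov.ax1 A (imp A A))) (Prov.ax1 A A)

theorem prov_top : Prov top := prov_imp_refl _

theorem Deriv.mono {Γ Γ' : Set Formula} (h : Γ ⊆ Γ') {A} (d : Deriv Γ A) : Deriv Γ' A := by
  induction d with
  | prov h' => exact .prov h'
  | hyp h' => exact .hyp (h h')
  | mp _ _ ih1 ih2 => exact .mp ih1 ih2

theorem Deriv.cut {Γ Γ' : Set Formula} {B} (d : Deriv Γ B)
    (hs : ∀ C ∈ Γ, Deriv Γ' C) : Deriv Γ' B := by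
  induction d with
  | prov h' => exact .prov h'
  | hyp h' => exact hs _ h'
  | mp _ _ ih1 ih2 => exact .mp ih1 ih2

theorem deduction {Γ : Set Formula} {A B} (h : Deriv (insert A Γ) B) : Deriv Γ (imp A B) := by
  induction h with
  | prov h' => exact .mp (.prov (Prov.ax1 _ _)) (.prov h')
  | hyp h' =>
      rcases h' with rfl | h'
      · exact .prov (prov_imp_refl _)
      · exact .mp (.prov (Prov.ax1 _ _)) (.hyp h')
  | mp _ _ ih1 ih2 => exact .mp (.mp (.prov (Prov.ax2 _ _ _)) ih1) ih2

theorem prov_of_deriv_empty {B} (h : Deriv (∅ : Set Formula) B) : Prov B := by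
  induction h with
  | prov h' => exact h'
  | hyp h' => exact absurd h' (Set.notMem_empty _)
  | mp _ _ ih1 ih2 => exact Prov.mp ih1 ih2

theorem prov_imp_of_deriv {A B} (h : Deriv {A} B) : Prov (imp A B) :=
  prov_of_deriv_empty (deduction (by simpa using h))

theorem prov_imp_trans {A B C} (h1 : Prov (imp A B)) (h2 : Prov (imp B C)) :
    Prov (imp A C) :=
  prov_imp_of_deriv (.mp (.prov h2) (.mp (.prov h1) (.hyp rfl)))

theorem prov_imp_intro_and {X Y Z} (h1 : Prov (imp X Y)) (h2 : Prov (imp X Z)) :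
    Prov (imp X (Formula.and Y Z)) :=
  prov_imp_of_deriv <| .mp (.mp (.prov (Prov.ax5 _ _)) (.mp (.prov h1) (.hyp rfl)))
    (.mp (.prov h2) (.hyp rfl))

theorem prov_imp_top (A : Formula) : Prov (imp A top) :=
  Prov.mp (Prov.ax1 _ _) prov_top

theorem prov_exfalso (B : Formula) : Prov (imp bot B) :=
  prov_imp_of_deriv <| .mp (.mp (.prov (Prov.ax10 top B)) (.hyp rfl)) (.prov prov_top)

theorem dia_mono {A B} (h : Prov (imp A B)) : Prov (imp (dia A) (dia B)) :=
  Prov.gc1 (prov_imp_trans h (Prov.gc2 (prov_imp_refl (dia B))))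

theorem prov_dia_nab (B : Formula) : Prov (imp (dia (nab B)) B) :=
  Prov.gc1 (prov_imp_refl (nab B))

theorem prov_dia_bot : Prov (imp (dia bot) bot) :=
  Prov.gc1 (prov_exfalso (nab bot))

theorem prov_or_elim {A B C} (h1 : Prov (imp A C)) (h2 : Prov (imp B C)) :
    Prov (imp (Formula.or A B) C) :=
  Prov.mp (Prov.mp (Prov.ax8 _ _ _) h1) h2

theorem prov_dia_or (A B : Formula) :
    Prov (imp (dia (Formula.or A B)) (Formula.or (dia A) (dia B))) :=
  Prov.gc1 (prov_or_elim (Prov.gc2 (Prov.ax6 (dia A) (dia B)))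
    (Prov.gc2 (Prov.ax7 (dia A) (dia B))))


/-- Conjunction of a list of formulas. -/
def conj : List Formula → Formula
  | [] => top
  | A :: L => Formula.and A (conj L)

theorem deriv_conj {Γ : Set Formula} {L : List Formula} (h : ∀ C ∈ L, Deriv Γ C) :
    Deriv Γ (conj L) := by
  induction L with
  | nil => exact .prov prov_top
  | cons A L ih =>
      exact .mp (.mp (.prov (Prov.ax5 _ _)) (h A (List.mem_cons_self)))
        (ih fun C hC => h C (List.mem_cons_of_mem _ hC))

theorem prov_conj_elem {L : List Formula} {C} (h : C ∈ L) : Prov (imp (conj L) C) := by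
  induction L with
  | nil => exact absurd h List.not_mem_nil
  | cons A L ih =>
      rcases List.mem_cons.1 h with rfl | h
      · exact Prov.ax3 _ _
      · exact prov_imp_trans (Prov.ax4 _ _) (ih h)

theorem deriv_finite {Γ : Set Formula} {B} (h : Deriv Γ B) :
    ∃ L : List Formula, (∀ C ∈ L, C ∈ Γ) ∧ Deriv {C | C ∈ L} B := by
  induction h with
  | prov h' => exact ⟨[], by simp, .prov h'⟩
  | hyp h' => exact ⟨[_], by simpa, .hyp (by simp)⟩
  | mp _ _ ih1 ih2 =>
      obtain ⟨L1, hL1, d1⟩ := ih1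
      obtain ⟨L2, hL2, d2⟩ := ih2
      refine ⟨L1 ++ L2, ?_, .mp (d1.mono ?_) (d2.mono ?_)⟩
      · intro C hC; rcases List.mem_append.1 hC with h | h
        · exact hL1 C h
        · exact hL2 C h
      · intro C hC; exact List.mem_append.2 (Or.inl hC)
      · intro C hC; exact List.mem_append.2 (Or.inr hC)

theorem prov_conj_imp {L : List Formula} {B} (h : Deriv {C | C ∈ L} B) :
    Prov (imp (conj L) B) :=
  prov_imp_of_deriv (h.cut fun C hC => .mp (.prov (prov_conj_elem hC)) (.hyp rfl))

theorem prov_conj_subset {L M : List Formula} (h : ∀ C ∈ M, C ∈ L) :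
    Prov (imp (conj L) (conj M)) :=
  prov_conj_imp (deriv_conj fun C hC => .hyp (h C hC))

/-- From a derivation, extract a conjunction of hypotheses. -/
theorem deriv_conj_imp {Γ : Set Formula} {B} (h : Deriv Γ B) :
    ∃ L : List Formula, (∀ C ∈ L, C ∈ Γ) ∧ Prov (imp (conj L) B) := by
  obtain ⟨L, hL, d⟩ := deriv_finite h
  exact ⟨L, hL, prov_conj_imp d⟩

/-- A prime theory: deductively closed, proper, and prime. -/
def IsPrime (Γ : Set Formula) : Prop :=
  (∀ B, Deriv Γ B → B ∈ Γ) ∧ bot ∉ Γ ∧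
    ∀ B C, Formula.or B C ∈ Γ → B ∈ Γ ∨ C ∈ Γ

theorem list_in_chain {c : Set (Set Formula)} (hc : IsChain (· ⊆ ·) c)
    (hne : c.Nonempty) (L : List Formula) (h : ∀ C ∈ L, C ∈ ⋃₀ c) :
    ∃ t ∈ c, ∀ C ∈ L, C ∈ t := by
  induction L with
  | nil => exact ⟨hne.choose, hne.choose_spec, by simp⟩
  | cons A L ih =>
      obtain ⟨t, ht, hLt⟩ := ih fun C hC => h C (List.mem_cons_of_mem _ hC)
      obtain ⟨s, hs, hAs⟩ := h A (List.mem_cons_self)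
      rcases eq_or_ne s t with rfl | hst
      · exact ⟨s, hs, fun C hC => by
          rcases List.mem_cons.1 hC with rfl | hC
          · exact hAs
          · exact hLt C hC⟩
      · rcases hc hs ht hst with hsub | hsub
        · exact ⟨t, ht, fun C hC => by
            rcases List.mem_cons.1 hC with rfl | hC
            · exact hsub hAs
            · exact hLt C hC⟩
        · exact ⟨s, hs, fun C hC => by
            rcases List.mem_cons.1 hC with rfl | hC
            · exact hAs
            · exact hsub (hLt C hC)⟩

/-- Deriving from a union of a chain means deriving from a member. -/
theorem deriv_sUnion {c : Set (Set Formula)} (hc : IsChain (· ⊆ ·) c)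
    (hne : c.Nonempty) {B} (h : Deriv (⋃₀ c) B) : ∃ t ∈ c, Deriv t B := by
  obtain ⟨L, hL, d⟩ := deriv_finite h
  obtain ⟨t, ht, hLt⟩ := list_in_chain hc hne L hL
  exact ⟨t, ht, d.cut fun C hC => .hyp (hLt C hC)⟩

/-- Lindenbaum: extend a set not deriving B to a prime theory omitting B. -/
theorem lindenbaum {Γ : Set Formula} {B : Formula} (h : ¬ Deriv Γ B) :
    ∃ Δ : Set Formula, Γ ⊆ Δ ∧ IsPrime Δ ∧ B ∉ Δ := by
  set S : Set (Set Formula) := {Δ | Γ ⊆ Δ ∧ ¬ Deriv Δ B} with hS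
  obtain ⟨m, hΓm, hm⟩ := zorn_subset_nonempty S
    (fun c hcS hc hcne => by
      refine ⟨⋃₀ c, ⟨?_, ?_⟩, fun s hs => Set.subset_sUnion_of_mem hs⟩
      · obtain ⟨t, ht⟩ := hcne
        exact (hcS ht).1.trans (Set.subset_sUnion_of_mem ht)
      · intro hd
        obtain ⟨t, ht, hdt⟩ := deriv_sUnion hc hcne hd
        exact (hcS ht).2 hdt)
    Γ ⟨le_refl Γ, h⟩
  have hmS : Γ ⊆ m ∧ ¬ Deriv m B := hm.prop
  have hclosed : ∀ C, Deriv m C → C ∈ m := by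
    intro C hC
    by_contra hCm
    have hins : insert C m ∈ S := by
      refine ⟨hmS.1.trans (Set.subset_insert _ _), fun hd => hmS.2 ?_⟩
      exact .mp (deduction hd) hC
    exact hCm (hm.le_of_ge hins (Set.subset_insert _ _) (Set.mem_insert _ _))
  have hBm : B ∉ m := fun hB => hmS.2 (.hyp hB)
  refine ⟨m, hmS.1, ⟨hclosed, ?_, ?_⟩, hBm⟩
  · intro hbot
    exact hBm (hclosed _ (.mp (.prov (prov_exfalso B)) (.hyp hbot)))
  · intro C D hCD
    by_contra hor
    push_neg at hor
    have hC : Deriv m (imp C B) := by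
      have : insert C m ∉ S := fun hmem =>
        hor.1 (hm.le_of_ge hmem (Set.subset_insert _ _) (Set.mem_insert _ _))
      rw [hS] at this
      simp only [Set.mem_setOf_eq, not_and, not_not] at this
      exact deduction (this (hmS.1.trans (Set.subset_insert _ _)))
    have hD : Deriv m (imp D B) := by
      have : insert D m ∉ S := fun hmem =>
        hor.2 (hm.le_of_ge hmem (Set.subset_insert _ _) (Set.mem_insert _ _))
      rw [hS] at this
      simp only [Set.mem_setOf_eq, not_and, not_not] at this
      exact deduction (this (hmS.1.trans (Set.subset_insert _ _)))
    exact hmS.2 (.mp (.mp (.mp (.prov (Prov.ax8 C D B)) hC) hD) (.hyp hCD))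

theorem prov_uncurry {X Y Z} (h : Prov (imp X (imp Y Z))) :
    Prov (imp (Formula.and X Y) Z) :=
  prov_imp_of_deriv <| .mp (.mp (.prov h) (.mp (.prov (Prov.ax3 _ _)) (.hyp rfl)))
    (.mp (.prov (Prov.ax4 _ _)) (.hyp rfl))

/-- ⊢ X → (X∧C)∨(X∧D) whenever ⊢ X → C∨D. -/
theorem prov_split {X C D} (h : Prov (imp X (Formula.or C D))) :
    Prov (imp X (Formula.or (Formula.and X C) (Formula.and X D))) := by
  have h1 : Deriv {X} (imp C (Formula.or (Formula.and X C) (Formula.and X D))) := by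
    have : Deriv (insert C {X}) (Formula.or (Formula.and X C) (Formula.and X D)) :=
      .mp (.prov (Prov.ax6 _ _))
        (.mp (.mp (.prov (Prov.ax5 X C)) (.hyp (by simp))) (.hyp (by simp)))
    exact deduction this
  have h2 : Deriv {X} (imp D (Formula.or (Formula.and X C) (Formula.and X D))) := by
    have : Deriv (insert D {X}) (Formula.or (Formula.and X C) (Formula.and X D)) :=
      .mp (.prov (Prov.ax7 _ _))
        (.mp (.mp (.prov (Prov.ax5 X D)) (.hyp (by simp))) (.hyp (by simp)))
    exact deduction this
  exact prov_imp_of_deriv <| .mp (.mp (.mp (.prov (Prov.ax8 _ _ _)) h1) h2)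
    (.mp (.prov h) (.hyp rfl))

/-- Existence lemma for ◆: if ◆B ∈ Γ (Γ prime) there is a prime Δ ∋ B with ◆C ∈ Γ
for every C ∈ Δ. -/
theorem dia_lindenbaum {Γ : Set Formula} (hΓ : IsPrime Γ) {B : Formula}
    (hB : dia B ∈ Γ) : ∃ Δ : Set Formula, IsPrime Δ ∧ B ∈ Δ ∧ ∀ C ∈ Δ, dia C ∈ Γ := by
  set S : Set (Set Formula) :=
    {Δ | B ∈ Δ ∧ ∀ L : List Formula, (∀ C ∈ L, C ∈ Δ) → dia (conj L) ∈ Γ} with hS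
  have hBS : ({B} : Set Formula) ∈ S := by
    refine ⟨rfl, fun L hL => ?_⟩
    have : Prov (imp B (conj L)) :=
      prov_imp_of_deriv (deriv_conj fun C hC => .hyp (hL C hC))
    exact hΓ.1 _ (.mp (.prov (dia_mono this)) (.hyp hB))
  obtain ⟨m, hBm, hm⟩ := zorn_subset_nonempty S
    (fun c hcS hc hcne => by
      obtain ⟨t, ht⟩ := hcne
      refine ⟨⋃₀ c, ⟨Set.subset_sUnion_of_mem ht (hcS ht).1, fun L hL => ?_⟩,
        fun s hs => Set.subset_sUnion_of_mem hs⟩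
      obtain ⟨u, hu, hLu⟩ := list_in_chain hc ⟨t, ht⟩ L hL
      exact (hcS hu).2 L hLu)
    {B} hBS
  have hmS : m ∈ S := hm.prop
  have hdm : ∀ F, Deriv m F → dia F ∈ Γ := by
    intro F hF
    obtain ⟨L, hL, hprov⟩ := deriv_conj_imp hF
    exact hΓ.1 _ (.mp (.prov (dia_mono hprov)) (.hyp (hmS.2 L hL)))
  have hclosed : ∀ C, Deriv m C → C ∈ m := by
    intro C hC
    by_contra hCm
    have hins : insert C m ∈ S := by
      refine ⟨Set.mem_insert_of_mem _ hmS.1, fun L hL => ?_⟩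
      have hdL : Deriv m (conj L) :=
        (deriv_conj fun E hE => Deriv.hyp (hL E hE)).cut
          (fun E hE => by
            rcases hE with rfl | hE
            · exact hC
            · exact .hyp hE)
      exact hdm _ hdL
    exact hCm (hm.le_of_ge hins (Set.subset_insert _ _) (Set.mem_insert _ _))
  have hbot : bot ∉ m := by
    intro hb
    exact hΓ.2.1 (hΓ.1 _ (.mp (.prov prov_dia_bot) (.hyp (hdm _ (.hyp hb)))))
  refine ⟨m, ⟨hclosed, hbot, ?_⟩, hmS.1, fun C hC => hdm _ (.hyp hC)⟩
  intro C D hCD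
  by_contra hor
  push_neg at hor
  have exL : ∀ E, E ∉ m → ∃ M : List Formula, (∀ F ∈ M, F ∈ m) ∧
      ∃ L : List Formula, Prov (imp (Formula.and (conj M) E) (conj L)) ∧
        dia (conj L) ∉ Γ := by
    intro E hEm
    have hnot : insert E m ∉ S := fun hmem =>
      hEm (hm.le_of_ge hmem (Set.subset_insert _ _) (Set.mem_insert _ _))
    rw [hS] at hnot
    simp only [Set.mem_setOf_eq, not_and, not_forall] at hnot
    obtain ⟨L, hL, hLΓ⟩ := hnot (Set.mem_insert_of_mem _ hmS.1)
    have hd : Deriv m (imp E (conj L)) :=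
      deduction ((deriv_conj fun F hF => Deriv.hyp (hL F hF)))
    obtain ⟨M, hM, hMp⟩ := deriv_conj_imp hd
    exact ⟨M, hM, L, prov_uncurry hMp, hLΓ⟩
  obtain ⟨M, hM, LC, hMC, hLC⟩ := exL C hor.1
  obtain ⟨N, hN, LD, hND, hLD⟩ := exL D hor.2
  set K : List Formula := Formula.or C D :: (M ++ N) with hK
  have hKm : ∀ F ∈ K, F ∈ m := by
    intro F hF
    rcases List.mem_cons.1 hF with rfl | hF
    · exact hCD
    · rcases List.mem_append.1 hF with h | h
      · exact hM F h
      · exact hN F h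
  have hdK : dia (conj K) ∈ Γ := hmS.2 K hKm
  have hsplit : Prov (imp (conj K)
      (Formula.or (Formula.and (conj K) C) (Formula.and (conj K) D))) :=
    prov_split (prov_conj_elem (List.mem_cons_self))
  have hdisj : Formula.or (dia (Formula.and (conj K) C))
      (dia (Formula.and (conj K) D)) ∈ Γ :=
    hΓ.1 _ (.mp (.prov (prov_imp_trans (dia_mono hsplit) (prov_dia_or _ _))) (.hyp hdK))
  have hKC : Prov (imp (Formula.and (conj K) C) (conj LC)) := by
    refine prov_imp_trans ?_ hMC
    exact prov_imp_intro_and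
      (prov_imp_trans (Prov.ax3 _ _) (prov_conj_subset fun F hF =>
        List.mem_cons_of_mem _ (List.mem_append.2 (Or.inl hF))))
      (Prov.ax4 _ _)
  have hKD : Prov (imp (Formula.and (conj K) D) (conj LD)) := by
    refine prov_imp_trans ?_ hND
    exact prov_imp_intro_and
      (prov_imp_trans (Prov.ax3 _ _) (prov_conj_subset fun F hF =>
        List.mem_cons_of_mem _ (List.mem_append.2 (Or.inr hF))))
      (Prov.ax4 _ _)
  rcases hΓ.2.2 _ _ hdisj with h1 | h1
  · exact hLC (hΓ.1 _ (.mp (.prov (dia_mono hKC)) (.hyp h1)))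
  · exact hLD (hΓ.1 _ (.mp (.prov (dia_mono hKD)) (.hyp h1)))

theorem dia_list {Γ : Set Formula} :
    ∀ L : List Formula, (∀ F ∈ L, ∃ C ∈ Γ, F = dia C) →
      ∃ E, Deriv Γ E ∧ Prov (imp (dia E) (conj L)) := by
  intro L
  induction L with
  | nil => exact fun _ => ⟨top, .prov prov_top, prov_imp_top _⟩
  | cons F L ih =>
      intro h
      obtain ⟨E, hE, hp⟩ := ih fun F hF => h F (List.mem_cons_of_mem _ hF)
      obtain ⟨C, hC, rfl⟩ := h F (List.mem_cons_self)
      refine ⟨Formula.and C E, .mp (.mp (.prov (Prov.ax5 _ _)) (.hyp hC)) hE, ?_⟩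
      exact prov_imp_intro_and (dia_mono (Prov.ax3 _ _))
        (prov_imp_trans (dia_mono (Prov.ax4 _ _)) hp)

theorem deriv_dia_image {Γ : Set Formula} {B}
    (h : Deriv {F | ∃ C ∈ Γ, F = dia C} B) : Deriv Γ (nab B) := by
  obtain ⟨L, hL, hp⟩ := deriv_conj_imp h
  obtain ⟨E, hE, hpe⟩ := dia_list L hL
  exact .mp (.prov (Prov.gc2 (prov_imp_trans hpe hp))) hE

/-- The canonical model, with worlds the prime theories. -/
def Can (W : {Γ : Set Formula // IsPrime Γ}) : KModel where
  X := {Γ : Set Formula // IsPrime Γ}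
  ne := ⟨W⟩
  le := fun a b => a.1 ⊆ b.1
  le_refl := fun _ => le_refl _
  le_trans := fun _ _ _ h1 h2 => h1.trans h2
  R := fun a b => ∀ C ∈ b.1, dia C ∈ a.1
  frame := fun _ _ _ _ h1 h2 h3 C hC => h1 (h2 C (h3 hC))
  v := fun p a => var p ∈ a.1
  up := fun _ _ _ h hx => h hx

theorem sat_and (M : KModel) (x : M.X) (B C : Formula) :
    M.sat x (Formula.and B C) ↔ M.sat x B ∧ M.sat x C := Iff.rfl
theorem sat_or (M : KModel) (x : M.X) (B C : Formula) :
    M.sat x (Formula.or B C) ↔ M.sat x B ∨ M.sat x C := Iff.rfl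
theorem sat_imp (M : KModel) (x : M.X) (B C : Formula) :
    M.sat x (imp B C) ↔ ∀ y, M.le x y → M.sat y B → M.sat y C := Iff.rfl
theorem sat_neg (M : KModel) (x : M.X) (B : Formula) :
    M.sat x (neg B) ↔ ∀ y, M.le x y → ¬ M.sat y B := Iff.rfl
theorem sat_dia (M : KModel) (x : M.X) (B : Formula) :
    M.sat x (dia B) ↔ ∃ y, M.R x y ∧ M.sat y B := Iff.rfl
theorem sat_nab (M : KModel) (x : M.X) (B : Formula) :
    M.sat x (nab B) ↔ ∀ y, M.R y x → M.sat y B := Iff.rfl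

/-- Truth lemma for the canonical model. -/
theorem truth (W : {Γ : Set Formula // IsPrime Γ}) :
    ∀ (B : Formula) (Γ : (Can W).X), (Can W).sat Γ B ↔ B ∈ Γ.1 := by
  intro B
  induction B with
  | var p => intro Γ; exact Iff.rfl
  | and B C ihB ihC =>
      intro Γ
      rw [sat_and]
      constructor
      · rintro ⟨h1, h2⟩
        exact Γ.2.1 _ (.mp (.mp (.prov (Prov.ax5 B C)) (.hyp ((ihB Γ).1 h1)))
          (.hyp ((ihC Γ).1 h2)))
      · intro h
        exact ⟨(ihB Γ).2 (Γ.2.1 _ (.mp (.prov (Prov.ax3 B C)) (.hyp h))),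
               (ihC Γ).2 (Γ.2.1 _ (.mp (.prov (Prov.ax4 B C)) (.hyp h)))⟩
  | or B C ihB ihC =>
      intro Γ
      rw [sat_or]
      constructor
      · rintro (h | h)
        · exact Γ.2.1 _ (.mp (.prov (Prov.ax6 B C)) (.hyp ((ihB Γ).1 h)))
        · exact Γ.2.1 _ (.mp (.prov (Prov.ax7 B C)) (.hyp ((ihC Γ).1 h)))
      · intro h
        rcases Γ.2.2.2 _ _ h with h | h
        · exact Or.inl ((ihB Γ).2 h)
        · exact Or.inr ((ihC Γ).2 h)
  | imp B C ihB ihC =>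
      intro Γ
      rw [sat_imp]
      constructor
      · intro h
        by_contra hBC
        have hnd : ¬ Deriv (insert B Γ.1) C := fun hd => hBC (Γ.2.1 _ (deduction hd))
        obtain ⟨Δ, hsub, hΔ, hCΔ⟩ := lindenbaum hnd
        have hBΔ : B ∈ Δ := hsub (Set.mem_insert _ _)
        have := h ⟨Δ, hΔ⟩ (fun F hF => hsub (Set.mem_insert_of_mem _ hF))
          ((ihB ⟨Δ, hΔ⟩).2 hBΔ)
        exact hCΔ ((ihC ⟨Δ, hΔ⟩).1 this)
      · intro h y hle hyB
        exact (ihC y).2 (y.2.1 _ (.mp (.hyp (hle h)) (.hyp ((ihB y).1 hyB))))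
  | neg B ihB =>
      intro Γ
      rw [sat_neg]
      constructor
      · intro h
        by_contra hn
        have hnd : ¬ Deriv (insert B Γ.1) bot := by
          intro hd
          have hd' : Deriv Γ.1 (imp B bot) := deduction hd
          exact hn (Γ.2.1 _ (.mp (.mp (.prov (Prov.ax9 B top))
            (.prov (prov_imp_top B))) hd'))
        obtain ⟨Δ, hsub, hΔ, hbΔ⟩ := lindenbaum hnd
        exact h ⟨Δ, hΔ⟩ (fun F hF => hsub (Set.mem_insert_of_mem _ hF))
          ((ihB ⟨Δ, hΔ⟩).2 (hsub (Set.mem_insert _ _)))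
      · intro h y hle hsat
        have hBy : B ∈ y.1 := (ihB y).1 hsat
        exact y.2.2.1 (y.2.1 _ (.mp (.mp (.prov (Prov.ax10 B bot)) (.hyp (hle h)))
          (.hyp hBy)))
  | dia B ihB =>
      intro Γ
      rw [sat_dia]
      constructor
      · rintro ⟨y, hR, hy⟩
        exact hR B ((ihB y).1 hy)
      · intro h
        obtain ⟨Δ, hΔ, hBΔ, hdia⟩ := dia_lindenbaum Γ.2 h
        exact ⟨⟨Δ, hΔ⟩, fun C hC => hdia C hC, (ihB ⟨Δ, hΔ⟩).2 hBΔ⟩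
  | nab B ihB =>
      intro Γ
      rw [sat_nab]
      constructor
      · intro h
        by_contra hn
        have hnd : ¬ Deriv {F | ∃ C ∈ Γ.1, F = dia C} B := fun hd =>
          hn (Γ.2.1 _ (deriv_dia_image hd))
        obtain ⟨Δ, hsub, hΔ, hBΔ⟩ := lindenbaum hnd
        have hR : ∀ C ∈ Γ.1, dia C ∈ Δ := fun C hC => hsub ⟨C, hC, rfl⟩
        exact hBΔ ((ihB ⟨Δ, hΔ⟩).1 (h ⟨Δ, hΔ⟩ hR))
      · intro h y hRy
        exact (ihB y).2 (y.2.1 _ (.mp (.prov (prov_dia_nab B)) (.hyp (hRy _ h))))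

theorem prov_of_deriv_prov {B} (h : Deriv {C | Prov C} B) : Prov B := by
  induction h with
  | prov h => exact h
  | hyp h => exact h
  | mp _ _ ih1 ih2 => exact Prov.mp ih1 ih2
end IntGC

/-- (Kripke completeness): every Kripke valid formula is provable in IntGC. -/
theorem completeness (A : Formula) (h : ∀ M : KModel, ∀ x : M.X, M.sat x A) :
    Prov A := by
  by_contra hA
  have hnd : ¬ IntGC.Deriv {C | Prov C} A := fun d => hA (IntGC.prov_of_deriv_prov d)
  obtain ⟨Γ0, _, hP, hA0⟩ := IntGC.lindenbaum hnd
  exact hA0 ((IntGC.truth ⟨Γ0, hP⟩ A ⟨Γ0, hP⟩).1 (h (IntGC.Can ⟨Γ0, hP⟩) ⟨Γ0, hP⟩))
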